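/- arXiv:2303.00405 — 3 statements merged into one kernel-verified Lean document; each statement's English description precedes it below -/
import Mathlib

section
/- Let ω : (0,R) → (0,∞) be continuous with (2π^{d/2}/Γ(d/2)) ∫₀^R ω(s) s^{d−1} ds = 1, let μ_ω be the measure on the open ball B^d(0,R) with density ω(‖x‖), and let μ₁ be the standard Gaussian measure on ℝ^d. If ρ : (0,∞) → (0,R) satisfies ∫₀^{ρ(r)} ω(s) s^{d−1} ds = (1/(2π^{d/2})) γ(d/2, r²/2) for all r > 0, where γ is the lower incomplete gamma function, then the map φ(x) = (ρ(‖x‖)/‖x‖) x pushes μ₁ forward to μ_ω. -/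
open MeasureTheory Real Set

/-- The lower incomplete gamma function `γ(t,x) = ∫₀ˣ s^{t−1} e^{−s} ds`. -/
noncomputable def lowerGamma (t x : ℝ) : ℝ := ∫ s in (0:ℝ)..x, s ^ (t - 1) * Real.exp (-s)

section Helpers

variable {t : ℝ}

lemma lg_integrableOn (ht : 0 < t) :
    IntegrableOn (fun s : ℝ => s ^ (t - 1) * Real.exp (-s)) (Ioi 0) :=
  (Real.GammaIntegral_convergent ht).congr_fun (fun x _ => mul_comm _ _) measurableSet_Ioi

lemma lg_intervalIntegrable (ht : 0 < t) {a b : ℝ} (ha : 0 ≤ a) (hb : 0 ≤ b) :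
    IntervalIntegrable (fun s : ℝ => s ^ (t - 1) * Real.exp (-s)) volume a b := by
  rw [intervalIntegrable_iff]
  refine (lg_integrableOn ht).mono_set ?_
  rw [uIoc_eq_union]
  rintro x (hx | hx)
  · exact lt_of_le_of_lt ha hx.1
  · exact lt_of_le_of_lt hb hx.1

lemma lowerGamma_zero : lowerGamma t 0 = 0 := intervalIntegral.integral_same

lemma lowerGamma_strictMonoOn (ht : 0 < t) : StrictMonoOn (lowerGamma t) (Ici 0) := by
  intro x hx y hy hxy
  have h1 := lg_intervalIntegrable (t := t) ht (le_refl 0) (hx : (0:ℝ) ≤ x)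
  have h2 := lg_intervalIntegrable (t := t) ht (hx : (0:ℝ) ≤ x) (hx.trans hxy.le)
  have hadd := intervalIntegral.integral_add_adjacent_intervals h1 h2
  have hpos : 0 < ∫ s in x..y, s ^ (t - 1) * Real.exp (-s) := by
    refine intervalIntegral.intervalIntegral_pos_of_pos_on h2 (fun s hs => ?_) hxy
    exact mul_pos (Real.rpow_pos_of_pos (lt_of_le_of_lt hx hs.1) _) (Real.exp_pos _)
  have : lowerGamma t y = lowerGamma t x + ∫ s in x..y, s ^ (t - 1) * Real.exp (-s) := by
    rw [lowerGamma, lowerGamma, ← hadd]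
  linarith

lemma lowerGamma_tendsto (ht : 0 < t) :
    Filter.Tendsto (lowerGamma t) Filter.atTop (nhds (Real.Gamma t)) := by
  rw [Real.Gamma_eq_integral ht]
  have h := MeasureTheory.intervalIntegral_tendsto_integral_Ioi 0
    (Real.GammaIntegral_convergent ht) Filter.tendsto_id
  have h' : Filter.Tendsto (fun x => ∫ s in (0:ℝ)..x, s ^ (t - 1) * Real.exp (-s)) Filter.atTop
      (nhds (∫ s in Ioi (0:ℝ), Real.exp (-s) * s ^ (t - 1))) := by
    simpa [mul_comm] using h
  exact h'

lemma lowerGamma_lt_Gamma (ht : 0 < t) {x : ℝ} (hx : 0 ≤ x) :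
    lowerGamma t x < Real.Gamma t := by
  have h1 : lowerGamma t x < lowerGamma t (x + 1) :=
    lowerGamma_strictMonoOn ht hx (mem_Ici.2 (by linarith)) (by linarith)
  have h2 : lowerGamma t (x + 1) ≤ Real.Gamma t := by
    refine ge_of_tendsto (lowerGamma_tendsto ht) ?_
    filter_upwards [Filter.eventually_ge_atTop (x + 1)] with z hz
    rcases eq_or_lt_of_le hz with h | h
    · exact h ▸ le_refl _
    · exact ((lowerGamma_strictMonoOn ht) (mem_Ici.2 (by linarith))
        (mem_Ici.2 (by linarith)) h).le
  linarith

lemma lowerGamma_continuousOn (ht : 0 < t) {X : ℝ} (hX : 0 ≤ X) :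
    ContinuousOn (lowerGamma t) (Icc 0 X) := by
  have hint : IntegrableOn (fun s : ℝ => s ^ (t - 1) * Real.exp (-s)) (uIcc 0 X) := by
    rw [uIcc_of_le hX, integrableOn_Icc_iff_integrableOn_Ioc]
    exact (lg_integrableOn ht).mono_set Ioc_subset_Ioi_self
  have := intervalIntegral.continuousOn_primitive_interval (a := 0) (b := X) hint
  rwa [uIcc_of_le hX] at this

lemma key_subst (d : ℕ) (hd : 1 ≤ d) {b : ℝ} (hb : 0 ≤ b) :
    ∫ r in (0:ℝ)..b, r ^ (d - 1) * Real.exp (-r ^ 2 / 2)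
      = 2 ^ ((d:ℝ)/2 - 1) * lowerGamma ((d:ℝ)/2) (b ^ 2 / 2) := by
  have hd2 : (0:ℝ) < (d:ℝ)/2 := by positivity
  set q : ℝ := (d:ℝ)/2 - 1 with hq
  set g : ℝ → ℝ := fun u => (2*u) ^ q * Real.exp (-u) with hgdef
  have point : ∀ r : ℝ, 0 < r →
      r ^ (d - 1) * Real.exp (-r ^ 2 / 2) = r • g (r ^ 2 / 2) := by
    intro r hr
    have h2 : 2 * (r ^ 2 / 2) = r ^ 2 := by ring
    have hrpow : (r ^ 2 : ℝ) ^ q = r ^ (2 * q) := by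
      rw [← Real.rpow_natCast r 2, ← Real.rpow_mul hr.le]
      norm_num
    have hcast : ((d - 1 : ℕ) : ℝ) = (d : ℝ) - 1 := by
      push_cast [Nat.cast_sub hd]; ring
    have : r ^ (d - 1) = (r : ℝ) ^ ((d:ℝ) - 1) := by
      rw [← Real.rpow_natCast r (d - 1), hcast]
    rw [this, hgdef]
    simp only [smul_eq_mul, h2, hrpow]
    rw [show (-(r ^ 2 / 2)) = -r^2/2 by ring]
    rw [show r * (r ^ (2*q) * Real.exp (-r^2/2)) = (r^(1:ℝ) * r^(2*q)) * Real.exp (-r^2/2) by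
      rw [Real.rpow_one]; ring]
    rw [← Real.rpow_add hr]
    norm_num [hq]; ring_nf
  have hgcont : ContinuousOn g (Ioi 0) := by
    refine ContinuousOn.mul ?_ (Real.continuous_exp.comp continuous_neg).continuousOn
    refine ContinuousOn.rpow_const ((continuous_const.mul continuous_id).continuousOn) ?_
    intro x hx
    rw [mem_Ioi] at hx
    exact Or.inl (mul_ne_zero two_ne_zero (ne_of_gt hx))
  have hsub := intervalIntegral.integral_comp_smul_deriv''' (a := 0) (b := b)
    (f := fun r => r ^ 2 / 2) (f' := fun r => r) (g := g) ?_ ?_ ?_ ?_ ?_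
  · have hleft : ∫ r in (0:ℝ)..b, r ^ (d-1) * Real.exp (-r ^ 2 / 2)
        = ∫ r in (0:ℝ)..b, r • ((g ∘ fun r => r ^ 2 / 2) r) := by
      refine intervalIntegral.integral_congr_ae ?_
      have h0 : ∀ᵐ r : ℝ ∂volume, r ≠ 0 := by
        simp [ae_iff]
      filter_upwards [h0] with r hr0 hrmem
      rw [uIoc_of_le hb] at hrmem
      exact point r hrmem.1
    rw [hleft, hsub]
    have h02 : (0:ℝ) ^ 2 / 2 = 0 := by norm_num
    rw [h02]
    have hright : ∫ u in (0:ℝ)..(b ^ 2 / 2), g u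
        = ∫ u in (0:ℝ)..(b ^ 2 / 2), 2 ^ q * (u ^ q * Real.exp (-u)) := by
      refine intervalIntegral.integral_congr fun u hu => ?_
      rw [uIcc_of_le (by positivity)] at hu
      rw [hgdef]
      simp only
      rw [Real.mul_rpow (by norm_num) hu.1, mul_assoc]
    rw [hright, intervalIntegral.integral_const_mul, lowerGamma, hq]
  · exact (continuousOn_id.pow 2).div_const 2
  · intro x hx
    have : HasDerivAt (fun r : ℝ => r ^ 2 / 2) x x := by
      have h := (hasDerivAt_pow 2 x).div_const 2
      simpa using h
    exact this.hasDerivWithinAt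
  · refine hgcont.mono ?_
    rintro _ ⟨r, hr, rfl⟩
    rw [min_eq_left hb, max_eq_right hb] at hr
    exact mem_Ioi.2 (div_pos (pow_pos hr.1 2) two_pos)
  · have hsub2 : (fun r : ℝ => r ^ 2 / 2) '' Set.uIcc 0 b ⊆ Icc 0 (b ^ 2 / 2) := by
      rintro _ ⟨r, hr, rfl⟩
      rw [uIcc_of_le hb] at hr
      constructor
      · positivity
      · have : r ^ 2 ≤ b ^ 2 := by nlinarith [hr.1, hr.2]
        linarith
    refine (IntegrableOn.mono_set ?_ hsub2)
    have h1 : IntegrableOn (fun u : ℝ => 2 ^ q * (u ^ q * Real.exp (-u))) (Icc 0 (b ^ 2 / 2)) := by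
      rw [integrableOn_Icc_iff_integrableOn_Ioc]
      exact ((lg_integrableOn (t := (d:ℝ)/2) hd2).mono_set Ioc_subset_Ioi_self).const_mul _
    refine h1.congr_fun (fun u hu => ?_) measurableSet_Icc
    rw [hgdef]
    simp only
    rw [Real.mul_rpow (by norm_num) hu.1]
    ring
  · have hcont : Continuous fun r : ℝ => r ^ (d - 1) * Real.exp (-r ^ 2 / 2) := by fun_prop
    have h1 : IntegrableOn (fun r : ℝ => r ^ (d - 1) * Real.exp (-r ^ 2 / 2)) (Set.uIcc 0 b) :=
      hcont.integrableOn_uIcc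
    refine Integrable.congr h1 ?_
    have h0 : ∀ᵐ r : ℝ ∂(volume.restrict (Set.uIcc 0 b)), r ≠ 0 := by
      refine ae_restrict_of_ae ?_
      simp [ae_iff]
    filter_upwards [h0, ae_restrict_mem measurableSet_uIcc] with r hr0 hrmem
    rw [uIcc_of_le hb] at hrmem
    exact point r (lt_of_le_of_ne hrmem.1 (Ne.symm hr0))

lemma prod_withDensity_snd {α β : Type*} [MeasurableSpace α] [MeasurableSpace β]
    (σ : Measure α) (Λ : Measure β) [SigmaFinite σ] [SigmaFinite Λ]
    (g : β → ENNReal) (hg : Measurable g) (hfin : SigmaFinite (Λ.withDensity g)) :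
    (σ.prod Λ).withDensity (fun p => g p.2) = σ.prod (Λ.withDensity g) := by
  refine (Measure.prod_eq fun s t hs ht => ?_).symm
  rw [withDensity_apply _ (hs.prod ht), ← Measure.prod_restrict s t,
    lintegral_prod (fun p => g p.2)
      ((show Measurable (fun p : α × β => g p.2) from hg.comp measurable_snd).aemeasurable)]
  simp only
  rw [lintegral_const]
  rw [Measure.restrict_apply_univ]
  rw [withDensity_apply _ ht]
  ring

variable {E : Type*} [NormedAddCommGroup E] [NormedSpace ℝ E] [MeasurableSpace E]
  [BorelSpace E] [FiniteDimensional ℝ E] [Nontrivial E]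
  (μ : Measure E) [μ.IsAddHaarMeasure]

open Metric in
lemma radial_repr (f : ℝ → ENNReal) (hf : Measurable f) :
    μ.withDensity (fun x => f ‖x‖) =
      Measure.map (Subtype.val ∘ (homeomorphUnitSphereProd E).symm)
        ((μ.toSphere.prod (Measure.volumeIoiPow (Module.finrank ℝ E - 1))).withDensity
          (fun p => f p.2.1)) := by
  have hcompl : MeasurableSet ({0}ᶜ : Set E) := (measurableSet_singleton 0).compl
  have hemb : MeasurableEmbedding (Subtype.val : ({0}ᶜ : Set E) → E) :=
    MeasurableEmbedding.subtype_coe hcompl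
  have hhm : Measurable ((homeomorphUnitSphereProd E).symm :
      Metric.sphere (0:E) 1 × Ioi (0:ℝ) → ({0}ᶜ : Set E)) :=
    (homeomorphUnitSphereProd E).symm.measurable
  have hprod := (μ.measurePreserving_homeomorphUnitSphereProd).map_eq
  ext s hs
  rw [withDensity_apply _ hs,
    Measure.map_apply (hemb.measurable.comp hhm) hs,
    withDensity_apply _ ((hemb.measurable.comp hhm) hs), ← hprod,
    setLIntegral_map (f := fun p : Metric.sphere (0:E) 1 × Ioi (0:ℝ) => f p.2.1)
      ((hemb.measurable.comp hhm) hs)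
      (show Measurable (fun p : Metric.sphere (0:E) 1 × Ioi (0:ℝ) => f p.2.1) from
        (hf.comp measurable_subtype_coe).comp measurable_snd)
      (homeomorphUnitSphereProd E).measurable]
  have hset : ((homeomorphUnitSphereProd E) ⁻¹'
      ((Subtype.val ∘ (homeomorphUnitSphereProd E).symm) ⁻¹' s))
      = (Subtype.val ⁻¹' s : Set ({0}ᶜ : Set E)) := by
    ext y
    simp
  rw [hset]
  have hfun : ∀ y : ({0}ᶜ : Set E),
      f (((homeomorphUnitSphereProd E) y).2 : ℝ) = f ‖(y : E)‖ := by
    intro y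
    simp [homeomorphUnitSphereProd_apply_snd_coe]
  refine Eq.symm ?_
  calc ∫⁻ y in (Subtype.val ⁻¹' s : Set ({0}ᶜ : Set E)),
        f (((homeomorphUnitSphereProd E) y).2 : ℝ) ∂(μ.comap Subtype.val)
      = ∫⁻ y in (Subtype.val ⁻¹' s : Set ({0}ᶜ : Set E)),
        (fun x : E => f ‖x‖) (y : E) ∂(μ.comap Subtype.val) := by
        refine setLIntegral_congr_fun ?_ ?_
        · exact hemb.measurableSet_preimage.mpr (by rw [Subtype.range_coe]; exact hs.inter hcompl)
        · exact fun y _ => hfun y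
    _ = ∫⁻ x in Subtype.val '' (Subtype.val ⁻¹' s : Set ({0}ᶜ : Set E)), f ‖x‖ ∂μ :=
        setLIntegral_subtype hcompl _ (fun x => f ‖x‖)
    _ = ∫⁻ x in s, f ‖x‖ ∂μ := by
        rw [Subtype.image_preimage_coe]
        refine setLIntegral_congr ?_
        have h0 : μ {(0:E)} = 0 := measure_singleton 0
        rw [ae_eq_set]
        constructor
        · simpa using measure_mono_null (fun x hx => by
            simp only [mem_diff, mem_inter_iff, mem_compl_iff, mem_singleton_iff] at hx ⊢
            tauto) h0
        · simpa using measure_mono_null (fun x hx => by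
            simp only [mem_diff, mem_inter_iff, mem_compl_iff, mem_singleton_iff] at hx ⊢
            tauto) h0

lemma wdIio (n : ℕ) (g : ℝ → ENNReal) (hg : Measurable g) {c : ℝ} (hc : 0 < c) :
    ((Measure.volumeIoiPow n).withDensity (fun r : Ioi (0:ℝ) => g r.1))
        (Iio (⟨c, hc⟩ : Ioi (0:ℝ)))
      = ∫⁻ r in Ioc (0:ℝ) c, ENNReal.ofReal (r ^ n) * g r := by
  rw [withDensity_apply _ measurableSet_Iio, Measure.volumeIoiPow,
    restrict_withDensity measurableSet_Iio,
    lintegral_withDensity_eq_lintegral_mul _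
      (by exact (measurable_subtype_coe.pow_const n).ennreal_ofReal)
      (show Measurable (fun r : Ioi (0:ℝ) => g r.1) from hg.comp measurable_subtype_coe)]
  have := setLIntegral_subtype (μ := volume) measurableSet_Ioi
    (Iio (⟨c, hc⟩ : Ioi (0:ℝ))) (fun a : ℝ => ENNReal.ofReal (a ^ n) * g a)
  simp only [Pi.mul_apply]
  rw [this, image_subtype_val_Ioi_Iio, Measure.restrict_congr_set Ioo_ae_eq_Ioc]

lemma wdUniv (n : ℕ) (g : ℝ → ENNReal) (hg : Measurable g) :
    ((Measure.volumeIoiPow n).withDensity (fun r : Ioi (0:ℝ) => g r.1)) univ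
      = ∫⁻ r in Ioi (0:ℝ), ENNReal.ofReal (r ^ n) * g r := by
  rw [withDensity_apply _ MeasurableSet.univ, Measure.volumeIoiPow,
    restrict_withDensity MeasurableSet.univ,
    lintegral_withDensity_eq_lintegral_mul _
      (by exact (measurable_subtype_coe.pow_const n).ennreal_ofReal)
      (show Measurable (fun r : Ioi (0:ℝ) => g r.1) from hg.comp measurable_subtype_coe)]
  have := setLIntegral_subtype (μ := volume) measurableSet_Ioi
    (univ : Set (Ioi (0:ℝ))) (fun a : ℝ => ENNReal.ofReal (a ^ n) * g a)
  simp only [Pi.mul_apply]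
  rw [this, image_univ, Subtype.range_coe]

end Helpers

/-- If `ω : (0,R) → (0,∞)` is continuous and normalized so that `μ_ω` (the measure on the
ball `B^d(0,R)` with density `ω(‖x‖)`) is a probability measure, and `ρ` solves
`∫₀^{ρ(r)} ω(s) s^{d−1} ds = γ(d/2, r²/2)/(2π^{d/2})`, then `φ(x) = (ρ(‖x‖)/‖x‖) x`
pushes the standard Gaussian measure on `ℝ^d` forward to `μ_ω`. -/
theorem stmt2 (d : ℕ) (hd : 1 ≤ d) (R : ℝ) (hR : 0 < R)
    (ω : ℝ → ℝ) (hωcont : ContinuousOn ω (Set.Ioo 0 R))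
    (hωpos : ∀ s ∈ Set.Ioo (0:ℝ) R, 0 < ω s)
    (hnorm : (2 * π ^ ((d:ℝ)/2) / Real.Gamma ((d:ℝ)/2)) *
      (∫ s in (0:ℝ)..R, ω s * s ^ (d - 1)) = 1)
    (ρ : ℝ → ℝ) (hρmem : ∀ r > (0:ℝ), ρ r ∈ Set.Ioo 0 R)
    (hρ : ∀ r > (0:ℝ),
      (∫ s in (0:ℝ)..(ρ r), ω s * s ^ (d - 1)) =
        (1 / (2 * π ^ ((d:ℝ)/2))) * lowerGamma ((d:ℝ)/2) (r^2 / 2)) :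
    Measure.map (fun x : EuclideanSpace ℝ (Fin d) => (ρ ‖x‖ / ‖x‖) • x)
      (volume.withDensity
        (fun x : EuclideanSpace ℝ (Fin d) =>
          ENNReal.ofReal ((2 * π) ^ (-(d:ℝ)/2) * Real.exp (-‖x‖^2 / 2))))
    = ((volume.restrict (Metric.ball (0 : EuclideanSpace ℝ (Fin d)) R)).withDensity
        (fun x => ENNReal.ofReal (ω ‖x‖))) := by
  classical
  have hd2 : (0:ℝ) < (d:ℝ)/2 := by positivity
  have hπd : (0:ℝ) < π ^ ((d:ℝ)/2) := Real.rpow_pos_of_pos Real.pi_pos _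
  set k : ℝ := 1 / (2 * π ^ ((d:ℝ)/2)) with hk
  have hkpos : 0 < k := by rw [hk]; positivity
  set cd : ℝ := (2 * π) ^ (-(d:ℝ)/2) with hcd
  have hcdpos : 0 < cd := Real.rpow_pos_of_pos (by positivity) _
  have hGa : 0 < Real.Gamma ((d:ℝ)/2) := Real.Gamma_pos_of_pos hd2
  have hconst : cd * 2 ^ ((d:ℝ)/2 - 1) = k := by
    rw [hcd, hk, Real.mul_rpow (by norm_num : (0:ℝ) ≤ 2) Real.pi_pos.le,
      show (-(d:ℝ)/2) = -((d:ℝ)/2) by ring,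
      Real.rpow_neg (by norm_num : (0:ℝ) ≤ 2), Real.rpow_neg Real.pi_pos.le,
      Real.rpow_sub (by norm_num : (0:ℝ) < 2), Real.rpow_one]
    have h2 : (0:ℝ) < (2:ℝ) ^ ((d:ℝ)/2) := Real.rpow_pos_of_pos two_pos _
    field_simp
  -- integrability of the weight
  have hFint : IntervalIntegrable (fun s => ω s * s ^ (d-1)) volume 0 R := by
    by_contra h
    rw [intervalIntegral.integral_undef h] at hnorm
    simp at hnorm
  have hIoc : IntegrableOn (fun s => ω s * s ^ (d-1)) (Ioc 0 R) :=
    (intervalIntegrable_iff_integrableOn_Ioc_of_le hR.le).1 hFint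
  have hsubint : ∀ {a b : ℝ}, 0 ≤ a → b ≤ R → a ≤ b →
      IntervalIntegrable (fun s => ω s * s ^ (d-1)) volume a b := by
    intro a b ha hbR hab
    rw [intervalIntegrable_iff_integrableOn_Ioc_of_le hab]
    exact hIoc.mono_set (fun x hx => ⟨lt_of_le_of_lt ha hx.1, hx.2.trans hbR⟩)
  set F : ℝ → ℝ := fun a => ∫ s in (0:ℝ)..a, ω s * s ^ (d-1) with hF
  have hF0 : F 0 = 0 := intervalIntegral.integral_same
  have hFmono : StrictMonoOn F (Icc 0 R) := by
    intro a ha b hb hab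
    have h1 := hsubint (le_refl 0) ha.2 ha.1
    have h2 := hsubint ha.1 hb.2 hab.le
    have hadd := intervalIntegral.integral_add_adjacent_intervals h1 h2
    have hpos : 0 < ∫ s in a..b, ω s * s ^ (d-1) := by
      refine intervalIntegral.intervalIntegral_pos_of_pos_on h2 (fun s hs => ?_) hab
      have hs1 : s ∈ Ioo (0:ℝ) R := ⟨lt_of_le_of_lt ha.1 hs.1, lt_of_lt_of_le hs.2 hb.2⟩
      exact mul_pos (hωpos s hs1) (pow_pos hs1.1 _)
    have hFb : F b = F a + ∫ s in a..b, ω s * s ^ (d-1) := by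
      rw [hF]; exact hadd.symm
    linarith
  have hFR : F R = k * Real.Gamma ((d:ℝ)/2) := by
    rw [hF, hk]
    have h1 : Real.Gamma ((d:ℝ)/2) ≠ 0 := ne_of_gt hGa
    field_simp at hnorm ⊢
    linarith
  -- the function T
  set T : ℝ → ℝ := fun r => k * lowerGamma ((d:ℝ)/2) (r^2/2) with hTdef
  have hT0 : T 0 = 0 := by
    rw [hTdef]
    norm_num [lowerGamma_zero]
  have hTmono : StrictMonoOn T (Ici 0) := by
    intro a ha b hb hab
    rw [hTdef]
    simp only
    refine (mul_lt_mul_iff_right₀ hkpos).2 ?_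
    refine lowerGamma_strictMonoOn hd2 (mem_Ici.2 (by positivity)) (mem_Ici.2 (by positivity)) ?_
    have : a^2 < b^2 := by nlinarith [mem_Ici.mp ha]
    linarith
  have hTlt : ∀ r : ℝ, T r < k * Real.Gamma ((d:ℝ)/2) := by
    intro r
    rw [hTdef]
    exact (mul_lt_mul_iff_right₀ hkpos).2 (lowerGamma_lt_Gamma hd2 (by positivity))
  have hTtend : Filter.Tendsto T Filter.atTop (nhds (k * Real.Gamma ((d:ℝ)/2))) := by
    rw [hTdef]
    refine Filter.Tendsto.const_mul k ((lowerGamma_tendsto hd2).comp ?_)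
    exact (Filter.tendsto_pow_atTop two_ne_zero).atTop_div_const two_pos
  have hTcontOn : ∀ {X : ℝ}, 0 ≤ X → ContinuousOn T (Icc 0 X) := by
    intro X hX
    rw [hTdef]
    refine continuousOn_const.mul ?_
    refine (lowerGamma_continuousOn hd2 (X := X^2/2) (by positivity)).comp
      ((continuous_pow 2).div_const 2).continuousOn ?_
    intro x hx
    constructor
    · have := hx.1; positivity
    · have h1 : x^2 ≤ X^2 := by nlinarith [hx.1, hx.2]
      linarith
  have hρT : ∀ r > (0:ℝ), F (ρ r) = T r := by
    intro r hr
    rw [hF, hTdef]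
    exact hρ r hr
  -- strict monotonicity and measurable extension of ρ
  have hρmono : StrictMonoOn ρ (Ioi 0) := by
    intro a ha b hb hab
    have h1 : F (ρ a) < F (ρ b) := by
      rw [hρT a ha, hρT b hb]
      exact hTmono (mem_Ici.2 (le_of_lt ha)) (mem_Ici.2 (le_of_lt hb)) hab
    have hma := hρmem a ha
    have hmb := hρmem b hb
    exact (hFmono.lt_iff_lt ⟨hma.1.le, hma.2.le⟩ ⟨hmb.1.le, hmb.2.le⟩).1 h1
  set ρh : ℝ → ℝ := fun t => if 0 < t then ρ t else 0 with hρh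
  have hρhmono : Monotone ρh := by
    intro a b hab
    rw [hρh]
    simp only
    by_cases hap : 0 < a
    · rw [if_pos hap, if_pos (lt_of_lt_of_le hap hab)]
      rcases eq_or_lt_of_le hab with rfl | h
      · exact le_refl _
      · exact (hρmono hap (hap.trans h) h).le
    · rw [if_neg hap]
      by_cases hbp : 0 < b
      · rw [if_pos hbp]
        exact (hρmem b hbp).1.le
      · rw [if_neg hbp]
  have hρhmeas : Measurable ρh := hρhmono.measurable
  -- measurable truncation of ω
  set ωt : ℝ → ℝ := fun t => if h : t ∈ Ioo (0:ℝ) R then ω t else 0 with hωt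
  have hωtmeas : Measurable ωt := by
    rw [hωt]
    exact Measurable.dite (continuousOn_iff_continuous_restrict.mp hωcont).measurable
      measurable_const measurableSet_Ioo
  have hωtnn : ∀ t, 0 ≤ ωt t := by
    intro t
    rw [hωt]
    simp only
    split_ifs with h
    · exact (hωpos t h).le
    · exact le_refl 0
  -- Euclidean space instances
  haveI hnontriv : Nontrivial (EuclideanSpace ℝ (Fin d)) := by
    refine Module.nontrivial_of_finrank_pos (R := ℝ) ?_
    rw [finrank_euclideanSpace_fin]
    exact hd
  have hfr : Module.finrank ℝ (EuclideanSpace ℝ (Fin d)) = d := finrank_euclideanSpace_fin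
  -- one-dimensional measures
  set f1 : ℝ → ENNReal := fun t => ENNReal.ofReal (cd * Real.exp (-t^2/2)) with hf1
  set f2 : ℝ → ENNReal := fun t => ENNReal.ofReal (ωt t) with hf2
  have hf1m : Measurable f1 := by
    rw [hf1]
    exact (measurable_const.mul (((measurable_id.pow_const 2).neg.div_const 2).exp)).ennreal_ofReal
  have hf2m : Measurable f2 := by
    rw [hf2]
    exact hωtmeas.ennreal_ofReal
  set Λ : Measure (Ioi (0:ℝ)) := Measure.volumeIoiPow (d - 1) with hΛ
  set ν₁ : Measure (Ioi (0:ℝ)) := Λ.withDensity (fun r => f1 r.1) with hν₁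
  set ν₂ : Measure (Ioi (0:ℝ)) := Λ.withDensity (fun r => f2 r.1) with hν₂
  have hν₁Iio : ∀ {c : ℝ} (hc : 0 < c), ν₁ (Iio ⟨c, hc⟩) = ENNReal.ofReal (T c) := by
    intro c hc
    rw [hν₁, hΛ, wdIio (d-1) f1 hf1m hc]
    have hcongr : ∫⁻ r in Ioc (0:ℝ) c, ENNReal.ofReal (r ^ (d-1)) * f1 r
        = ∫⁻ r in Ioc (0:ℝ) c, ENNReal.ofReal (r ^ (d-1) * (cd * Real.exp (-r^2/2))) := by
      refine setLIntegral_congr_fun measurableSet_Ioc (fun r hr => ?_)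
      rw [hf1, ENNReal.ofReal_mul (pow_nonneg hr.1.le _)]
    have hint : IntegrableOn (fun r : ℝ => r ^ (d-1) * (cd * Real.exp (-r^2/2))) (Ioc 0 c) := by
      apply Continuous.integrableOn_Ioc
      fun_prop
    rw [hcongr, ← ofReal_integral_eq_lintegral_ofReal hint ?_, ← intervalIntegral.integral_of_le hc.le]
    · congr 1
      have heq : ∫ r in (0:ℝ)..c, r ^ (d-1) * (cd * Real.exp (-r^2/2))
          = cd * ∫ r in (0:ℝ)..c, r ^ (d-1) * Real.exp (-r^2/2) := by
        rw [← intervalIntegral.integral_const_mul]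
        refine intervalIntegral.integral_congr fun r hr => by ring
      rw [heq, key_subst d hd hc.le, hTdef, ← hconst]
      ring
    · filter_upwards [ae_restrict_mem measurableSet_Ioc] with r hr
      have : (0:ℝ) ≤ r := hr.1.le
      positivity
  have hν₁univ : ν₁ univ = ENNReal.ofReal (k * Real.Gamma ((d:ℝ)/2)) := by
    set sfun : ℕ → Set (Ioi (0:ℝ)) :=
      fun n => Iio (⟨(n:ℝ)+1, mem_Ioi.2 (by positivity)⟩ : Ioi (0:ℝ)) with hsfun
    have hmono : Monotone sfun := by
      intro m n hmn
      rw [hsfun]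
      refine Iio_subset_Iio ?_
      rw [← Subtype.coe_le_coe]
      push_cast
      exact add_le_add_left (Nat.cast_le.2 hmn) 1
    have hcover : ⋃ n, sfun n = univ := by
      rw [eq_univ_iff_forall]
      intro x
      refine mem_iUnion.2 ⟨⌊(x:ℝ)⌋₊, ?_⟩
      rw [hsfun]
      simp only [mem_Iio, ← Subtype.coe_lt_coe]
      exact Nat.lt_floor_add_one (x:ℝ)
    have h1 := tendsto_measure_iUnion_atTop (μ := ν₁) hmono
    rw [hcover] at h1
    have h2 : Filter.Tendsto (ν₁ ∘ sfun) Filter.atTop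
        (nhds (ENNReal.ofReal (k * Real.Gamma ((d:ℝ)/2)))) := by
      have heq : ν₁ ∘ sfun = fun n : ℕ => ENNReal.ofReal (T ((n:ℝ)+1)) := by
        funext n
        exact hν₁Iio (by positivity)
      rw [heq]
      refine (ENNReal.continuous_ofReal.tendsto _).comp (hTtend.comp ?_)
      exact Filter.tendsto_atTop_add_const_right _ 1 tendsto_natCast_atTop_atTop
    exact tendsto_nhds_unique h1 h2
  -- ν₂ computations
  have hpart : ∀ {m : ℝ}, 0 < m → m ≤ R →
      ∫⁻ r in Ioc (0:ℝ) m, ENNReal.ofReal (r ^ (d-1)) * f2 r = ENNReal.ofReal (F m) := by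
    intro m hm hmR
    have hcongr : ∫⁻ r in Ioc (0:ℝ) m, ENNReal.ofReal (r ^ (d-1)) * f2 r
        = ∫⁻ r in Ioc (0:ℝ) m, ENNReal.ofReal (r ^ (d-1) * ωt r) := by
      refine setLIntegral_congr_fun measurableSet_Ioc (fun r hr => ?_)
      rw [hf2, ENNReal.ofReal_mul (pow_nonneg hr.1.le _)]
    have hae : ∀ᵐ r ∂(volume.restrict (Ioc (0:ℝ) m)),
        r ^ (d-1) * ωt r = ω r * r ^ (d-1) := by
      have hne : ∀ᵐ r : ℝ ∂(volume.restrict (Ioc (0:ℝ) m)), r ≠ R := by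
        refine ae_restrict_of_ae ?_
        simp [ae_iff]
      filter_upwards [hne, ae_restrict_mem measurableSet_Ioc] with r hrne hr
      have hrR : r < R := lt_of_le_of_ne (hr.2.trans hmR) hrne
      rw [hωt]
      simp only
      rw [dif_pos (show r ∈ Ioo (0:ℝ) R from mem_Ioo.mpr ⟨hr.1, hrR⟩)]
      ring
    have hint : IntegrableOn (fun r : ℝ => r ^ (d-1) * ωt r) (Ioc 0 m) := by
      have h1 : IntegrableOn (fun s => ω s * s ^ (d-1)) (Ioc 0 m) :=
        hIoc.mono_set (Ioc_subset_Ioc (le_refl 0) hmR)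
      exact h1.congr (hae.mono fun x hx => hx.symm)
    rw [hcongr, ← ofReal_integral_eq_lintegral_ofReal hint (by
      filter_upwards [ae_restrict_mem measurableSet_Ioc] with r hr
      exact mul_nonneg (pow_nonneg hr.1.le _) (hωtnn r))]
    congr 1
    have hFm : F m = ∫ x in Ioc (0:ℝ) m, ω x * x ^ (d-1) ∂volume := by
      rw [hF]
      exact intervalIntegral.integral_of_le hm.le
    rw [hFm]
    exact integral_congr_ae hae
  have hν₂Iio : ∀ {c : ℝ} (hc : 0 < c), ν₂ (Iio ⟨c, hc⟩) = ENNReal.ofReal (F (min c R)) := by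
    intro c hc
    rw [hν₂, hΛ, wdIio (d-1) f2 hf2m hc]
    rcases le_or_gt c R with hcR | hcR
    · rw [min_eq_left hcR]
      exact hpart hc hcR
    · rw [min_eq_right hcR.le]
      rw [← Ioc_union_Ioc_eq_Ioc hR.le hcR.le,
        lintegral_union measurableSet_Ioc (Ioc_disjoint_Ioc_of_le le_rfl)]
      have hzero : ∫⁻ r in Ioc R c, ENNReal.ofReal (r ^ (d-1)) * f2 r = 0 := by
        rw [setLIntegral_congr_fun measurableSet_Ioc
          (fun r hr => ?_), lintegral_zero]
        rw [hf2, hωt]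
        simp only
        rw [dif_neg (fun hmem => absurd hmem.2 (not_lt.mpr hr.1.le))]
        simp
      rw [hzero, hpart hR le_rfl, add_zero]
  have hν₂univ : ν₂ univ = ENNReal.ofReal (F R) := by
    rw [hν₂, hΛ, wdUniv (d-1) f2 hf2m]
    rw [← Ioc_union_Ioi_eq_Ioi hR.le,
      lintegral_union measurableSet_Ioi (Ioc_disjoint_Ioi le_rfl)]
    have hzero : ∫⁻ r in Ioi R, ENNReal.ofReal (r ^ (d-1)) * f2 r = 0 := by
      rw [setLIntegral_congr_fun measurableSet_Ioi
        (fun r hr => ?_), lintegral_zero]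
      rw [hf2, hωt]
      simp only
      rw [dif_neg (fun hmem => absurd hmem.2 (not_lt.mpr hr.le))]
      simp
    rw [hzero, hpart hR le_rfl, add_zero]
  haveI hfin1 : IsFiniteMeasure ν₁ := ⟨by rw [hν₁univ]; exact ENNReal.ofReal_lt_top⟩
  haveI hfin2 : IsFiniteMeasure ν₂ := ⟨by rw [hν₂univ]; exact ENNReal.ofReal_lt_top⟩
  -- the map on (0, ∞)
  set ρS : Ioi (0:ℝ) → Ioi (0:ℝ) := fun r => ⟨ρ r.1, (hρmem r.1 r.2).1⟩ with hρS
  have hρSmeas : Measurable ρS := by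
    have h2 : (fun r : Ioi (0:ℝ) => ρ r.1) = fun r : Ioi (0:ℝ) => ρh r.1 := by
      funext r
      rw [hρh]
      exact (if_pos r.2).symm
    rw [hρS]
    exact Measurable.subtype_mk (h2 ▸ (hρhmeas.comp measurable_subtype_coe))
  -- the key one-dimensional identity
  have hkey : Measure.map ρS ν₁ = ν₂ := by
    haveI : IsFiniteMeasure (Measure.map ρS ν₁) := by
      constructor
      rw [Measure.map_apply hρSmeas MeasurableSet.univ, preimage_univ]
      exact measure_lt_top _ _
    refine ext_of_generate_finite (range Iio)
      (BorelSpace.measurable_eq.trans (borel_eq_generateFrom_Iio _)) isPiSystem_Iio ?_ ?_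
    · rintro _ ⟨x, rfl⟩
      obtain ⟨c, hc⟩ := x
      have hc' : (0:ℝ) < c := hc
      rw [Measure.map_apply hρSmeas measurableSet_Iio]
      rcases lt_or_ge c R with hcR | hcR
      · -- c < R
        have hFc0 : 0 < F c := by
          have := hFmono (left_mem_Icc.2 hR.le) ⟨hc'.le, hcR.le⟩ hc'
          rwa [hF0] at this
        have hFcR : F c < k * Real.Gamma ((d:ℝ)/2) := by
          rw [← hFR]
          exact hFmono ⟨hc'.le, hcR.le⟩ (right_mem_Icc.2 hR.le) hcR
        obtain ⟨r₀, hr₀gt, hr₀0⟩ : ∃ r₀ : ℝ, F c < T r₀ ∧ 0 ≤ r₀ := by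
          have h1 := (hTtend.eventually (eventually_gt_nhds hFcR)).and
            (Filter.eventually_ge_atTop (0:ℝ))
          obtain ⟨r₀, h⟩ := h1.exists
          exact ⟨r₀, h.1, h.2⟩
        obtain ⟨b, hbmem, hTb⟩ := intermediate_value_Icc hr₀0 (hTcontOn hr₀0)
          (⟨by rw [hT0]; exact hFc0.le, hr₀gt.le⟩ : F c ∈ Icc (T 0) (T r₀))
        have hb0 : 0 < b := by
          rcases eq_or_lt_of_le hbmem.1 with he | h
          · exfalso
            rw [← he, hT0] at hTb
            exact absurd hTb.symm (ne_of_gt hFc0)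
          · exact h
        have hpre : ρS ⁻¹' (Iio ⟨c, hc⟩) = Iio (⟨b, hb0⟩ : Ioi (0:ℝ)) := by
          ext r
          simp only [mem_preimage, mem_Iio, hρS, ← Subtype.coe_lt_coe]
          have hmem_r := hρmem r.1 r.2
          constructor
          · intro h
            have h1 : F (ρ r.1) < F c :=
              (hFmono.lt_iff_lt ⟨hmem_r.1.le, hmem_r.2.le⟩ ⟨hc'.le, hcR.le⟩).2 h
            rw [hρT r.1 r.2, ← hTb] at h1
            exact (hTmono.lt_iff_lt (mem_Ici.2 (le_of_lt r.2)) hb0.le).1 h1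
          · intro h
            have h1 : T r.1 < T b := (hTmono.lt_iff_lt (mem_Ici.2 (le_of_lt r.2)) hb0.le).2 h
            rw [← hρT r.1 r.2, hTb] at h1
            exact (hFmono.lt_iff_lt ⟨hmem_r.1.le, hmem_r.2.le⟩ ⟨hc'.le, hcR.le⟩).1 h1
        rw [hpre, hν₁Iio hb0, hν₂Iio hc', min_eq_left hcR.le, hTb]
      · -- R ≤ c
        have hpre : ρS ⁻¹' (Iio ⟨c, hc⟩) = univ := by
          refine eq_univ_of_forall fun r => ?_
          simp only [mem_preimage, mem_Iio, hρS, ← Subtype.coe_lt_coe]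
          exact lt_of_lt_of_le (hρmem r.1 r.2).2 hcR
        rw [hpre, hν₁univ, hν₂Iio hc', min_eq_right hcR, hFR]
    · rw [Measure.map_apply hρSmeas MeasurableSet.univ, preimage_univ, hν₁univ, hν₂univ, hFR]
  -- measurability of the radial map
  have hφeq : (fun x : EuclideanSpace ℝ (Fin d) => (ρ ‖x‖ / ‖x‖) • x)
      = fun x => (ρh ‖x‖ / ‖x‖) • x := by
    funext x
    rcases eq_or_ne x 0 with rfl | hx
    · simp
    · rw [hρh]
      simp only
      rw [if_pos (norm_pos_iff.mpr hx)]
  have hφmeas : Measurable (fun x : EuclideanSpace ℝ (Fin d) => (ρ ‖x‖ / ‖x‖) • x) := by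
    rw [hφeq]
    exact ((hρhmeas.comp measurable_norm).div measurable_norm).smul measurable_id
  -- fold the goal into radial form
  have hfold : (fun x : EuclideanSpace ℝ (Fin d) =>
      ENNReal.ofReal (cd * Real.exp (-‖x‖^2 / 2))) = fun x => f1 ‖x‖ := by
    funext x
    rw [hf1]
  rw [hfold]
  have hne0 : ∀ᵐ x : EuclideanSpace ℝ (Fin d) ∂volume, x ≠ 0 := by simp [ae_iff]
  have hRHS : (volume.restrict (Metric.ball (0 : EuclideanSpace ℝ (Fin d)) R)).withDensity
        (fun x => ENNReal.ofReal (ω ‖x‖))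
      = volume.withDensity (fun x : EuclideanSpace ℝ (Fin d) => f2 ‖x‖) := by
    have h1 : (volume.restrict (Metric.ball (0 : EuclideanSpace ℝ (Fin d)) R)).withDensity
          (fun x => ENNReal.ofReal (ω ‖x‖))
        = (volume.restrict (Metric.ball (0 : EuclideanSpace ℝ (Fin d)) R)).withDensity
          (fun x => f2 ‖x‖) := by
      refine withDensity_congr_ae ?_
      filter_upwards [ae_restrict_mem measurableSet_ball, ae_restrict_of_ae hne0] with x hx hx0
      rw [hf2, hωt]
      simp only
      rw [dif_pos (show ‖x‖ ∈ Ioo (0:ℝ) R from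
        ⟨norm_pos_iff.mpr hx0, by rwa [← mem_ball_zero_iff]⟩)]
    have h2 := withDensity_indicator (μ := (volume : Measure (EuclideanSpace ℝ (Fin d))))
      (measurableSet_ball : MeasurableSet (Metric.ball (0 : EuclideanSpace ℝ (Fin d)) R))
      (fun x => f2 ‖x‖)
    have h3 : (Metric.ball (0:EuclideanSpace ℝ (Fin d)) R).indicator (fun x => f2 ‖x‖)
        = fun x => f2 ‖x‖ := by
      funext x
      by_cases hx : x ∈ Metric.ball (0:EuclideanSpace ℝ (Fin d)) R
      · rw [indicator_of_mem hx]
      · rw [indicator_of_notMem hx, hf2, hωt]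
        simp only
        rw [dif_neg, ENNReal.ofReal_zero]
        intro hmem
        exact hx (mem_ball_zero_iff.mpr hmem.2)
    rw [h1, ← h2, h3]
  rw [hRHS]
  -- the radial representation
  have hι : Measurable (Subtype.val ∘
      (homeomorphUnitSphereProd (EuclideanSpace ℝ (Fin d))).symm) :=
    measurable_subtype_coe.comp (homeomorphUnitSphereProd _).symm.measurable
  have hmain1 := radial_repr (volume : Measure (EuclideanSpace ℝ (Fin d))) f1 hf1m
  have hmain2 := radial_repr (volume : Measure (EuclideanSpace ℝ (Fin d))) f2 hf2m
  rw [hfr] at hmain1 hmain2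
  have hprod1 := prod_withDensity_snd
    (volume : Measure (EuclideanSpace ℝ (Fin d))).toSphere
    (Measure.volumeIoiPow (d-1)) (fun r : Ioi (0:ℝ) => f1 r.1)
    (hf1m.comp measurable_subtype_coe) (by rw [← hΛ, ← hν₁]; infer_instance)
  have hprod2 := prod_withDensity_snd
    (volume : Measure (EuclideanSpace ℝ (Fin d))).toSphere
    (Measure.volumeIoiPow (d-1)) (fun r : Ioi (0:ℝ) => f2 r.1)
    (hf2m.comp measurable_subtype_coe) (by rw [← hΛ, ← hν₂]; infer_instance)
  rw [hprod1] at hmain1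
  rw [hprod2] at hmain2
  rw [← hΛ, ← hν₁] at hmain1
  rw [← hΛ, ← hν₂] at hmain2
  rw [hmain1, hmain2, Measure.map_map hφmeas hι]
  have hcomm : ((fun x : EuclideanSpace ℝ (Fin d) => (ρ ‖x‖ / ‖x‖) • x) ∘
      (Subtype.val ∘ (homeomorphUnitSphereProd (EuclideanSpace ℝ (Fin d))).symm))
      = (Subtype.val ∘ (homeomorphUnitSphereProd (EuclideanSpace ℝ (Fin d))).symm) ∘
        (Prod.map id ρS) := by
    funext p
    obtain ⟨θ, r⟩ := p
    simp only [Function.comp_apply, homeomorphUnitSphereProd_symm_apply_coe,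
      Prod.map_apply, id_eq]
    have hθ : ‖(θ : EuclideanSpace ℝ (Fin d))‖ = 1 := mem_sphere_zero_iff_norm.mp θ.2
    have hr : (0:ℝ) < r := r.2
    have hnrm : ‖(r : ℝ) • (θ : EuclideanSpace ℝ (Fin d))‖ = (r:ℝ) := by
      rw [norm_smul, hθ, Real.norm_eq_abs, abs_of_pos hr, mul_one]
    rw [hnrm, smul_smul, div_mul_cancel₀ _ (ne_of_gt hr)]
  rw [hcomm, ← Measure.map_map hι (measurable_id.prodMap hρSmeas),
    ← Measure.map_prod_map _ _ measurable_id hρSmeas, Measure.map_id, hkey]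
end

section
/- The map φ : ℝ² → ℝ² defined by φ(x) = (x/‖x‖) √(e^{‖x‖²/2} − 1) for x ≠ 0 pushes the standard Gaussian measure on ℝ² forward to the measure μ_stereo with density (1/(4π)) · 4/(1 + ‖y‖²)² with respect to Lebesgue measure (i.e., the pushforward under stereographic projection of the normalized uniform measure on the 2-sphere). -/
open MeasureTheory Real Set

noncomputable def wfun (t : ℝ) : ℝ := Real.sqrt (Real.exp (t/2) - 1) / Real.sqrt t

noncomputable def wfun' (t : ℝ) : ℝ :=
  ((Real.exp (t/2) * (1/2) / (2 * Real.sqrt (Real.exp (t/2) - 1))) * Real.sqrt t -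
    Real.sqrt (Real.exp (t/2) - 1) * (1/(2*Real.sqrt t))) / (Real.sqrt t)^2

theorem wfun_hasDerivAt {t : ℝ} (ht : 0 < t) : HasDerivAt wfun (wfun' t) t := by
  have hA : (0:ℝ) < Real.exp (t/2) - 1 := by
    have : (1:ℝ) < Real.exp (t/2) := by
      rw [← Real.exp_zero]; exact Real.exp_lt_exp.2 (by linarith)
    linarith
  have h1 : HasDerivAt (fun s : ℝ => Real.exp (s/2) - 1) (Real.exp (t/2) * (1/2)) t := by
    simpa using (((hasDerivAt_id t).div_const 2).exp).sub_const 1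
  have h2 : HasDerivAt (fun s : ℝ => Real.sqrt (Real.exp (s/2) - 1))
      (Real.exp (t/2) * (1/2) / (2 * Real.sqrt (Real.exp (t/2) - 1))) t :=
    h1.sqrt (ne_of_gt hA)
  have h3 : HasDerivAt Real.sqrt (1/(2*Real.sqrt t)) t := Real.hasDerivAt_sqrt (ne_of_gt ht)
  exact h2.div h3 (by positivity)

theorem wfun_det_id {t : ℝ} (ht : 0 < t) :
    wfun t * (wfun t + 2 * wfun' t * t) = Real.exp (t/2) / 2 := by
  have hA : (0:ℝ) < Real.exp (t/2) - 1 := by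
    have : (1:ℝ) < Real.exp (t/2) := by
      rw [← Real.exp_zero]; exact Real.exp_lt_exp.2 (by linarith)
    linarith
  have hst : Real.sqrt t > 0 := Real.sqrt_pos.2 ht
  have hsA : Real.sqrt (Real.exp (t/2) - 1) > 0 := Real.sqrt_pos.2 hA
  have e1 : Real.sqrt t ^ 2 = t := Real.sq_sqrt ht.le
  have e2 : Real.sqrt (Real.exp (t/2) - 1) ^ 2 = Real.exp (t/2) - 1 := Real.sq_sqrt hA.le
  unfold wfun wfun'
  field_simp
  linear_combination (2 * Real.sqrt (Real.exp (t/2) - 1) ^ 2 - Real.exp (t/2) * Real.sqrt t ^ 2) * e1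

theorem wfun_pos {t : ℝ} (ht : 0 < t) : 0 < wfun t := by
  have hA : (0:ℝ) < Real.exp (t/2) - 1 := by
    have : (1:ℝ) < Real.exp (t/2) := by
      rw [← Real.exp_zero]; exact Real.exp_lt_exp.2 (by linarith)
    linarith
  exact div_pos (Real.sqrt_pos.2 hA) (Real.sqrt_pos.2 ht)

abbrev E2 := EuclideanSpace ℝ (Fin 2)

noncomputable def Lmap (x : E2) : E2 →L[ℝ] E2 :=
  wfun (‖x‖^2) • ContinuousLinearMap.id ℝ E2 +
    (wfun' (‖x‖^2) • (2 • innerSL ℝ x)).smulRight x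

theorem phi_eq : (fun x : E2 => (Real.sqrt (Real.exp (‖x‖^2 / 2) - 1) / ‖x‖) • x)
    = fun x : E2 => wfun (‖x‖^2) • x := by
  funext x
  simp [wfun, Real.sqrt_sq (norm_nonneg x)]

theorem phi_hasFDerivAt {x : E2} (hx : x ≠ 0) :
    HasFDerivAt (fun x : E2 => wfun (‖x‖^2) • x) (Lmap x) x := by
  have ht : 0 < ‖x‖^2 := by have := norm_pos_iff.2 hx; positivity
  have h1 : HasFDerivAt (fun y : E2 => ‖y‖^2) (2 • innerSL ℝ x) x :=
    (hasStrictFDerivAt_norm_sq x).hasFDerivAt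
  have h2 : HasFDerivAt (fun y : E2 => wfun (‖y‖^2))
      (wfun' (‖x‖^2) • (2 • innerSL ℝ x)) x :=
    by have := (wfun_hasDerivAt ht).comp_hasFDerivAt x h1; exact this
  have h3 := h2.smul (hasFDerivAt_id x); simp only [Lmap] at h3 ⊢; exact h3

theorem Lmap_det (x : E2) :
    (Lmap x).det = wfun (‖x‖^2) * (wfun (‖x‖^2) + 2 * wfun' (‖x‖^2) * ‖x‖^2) := by
  set a := wfun (‖x‖^2)
  set b := wfun' (‖x‖^2)
  have hdet : (Lmap x).det = LinearMap.det ((Lmap x) : E2 →ₗ[ℝ] E2) := rfl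
  rw [hdet, ← LinearMap.det_toMatrix (EuclideanSpace.basisFun (Fin 2) ℝ).toBasis,
    Matrix.det_fin_two]
  have happ : ∀ i j : Fin 2,
      LinearMap.toMatrix (EuclideanSpace.basisFun (Fin 2) ℝ).toBasis
        (EuclideanSpace.basisFun (Fin 2) ℝ).toBasis ((Lmap x) : E2 →ₗ[ℝ] E2) i j
      = a * (if j = i then 1 else 0) + 2 * b * (x j * x i) := by
    intro i j
    rw [LinearMap.toMatrix_apply]
    simp [Lmap, EuclideanSpace.basisFun_apply, real_inner_smul_left,
      EuclideanSpace.single_apply]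
    have hxj : inner ℝ x (EuclideanSpace.single j (1:ℝ)) = x j := by
      simp [EuclideanSpace.inner_single_right]
    rw [hxj, show (if i = j then wfun (‖x‖^2) else 0) = (if j = i then a else 0) by
      simp only [eq_comm, a]]
    ring
  rw [happ, happ, happ, happ]
  norm_num
  have hnorm : ‖x‖^2 = x 0 ^2 + x 1 ^2 := by
    rw [EuclideanSpace.norm_eq]
    rw [Real.sq_sqrt (by positivity)]
    simp [Fin.sum_univ_two]
  simp only [hnorm]
  ring

theorem measurable_wfun : Measurable wfun := by unfold wfun; fun_prop

theorem measurable_phi : Measurable (fun x : E2 => wfun (‖x‖^2) • x) :=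
  (measurable_wfun.comp (by fun_prop)).smul measurable_id

theorem norm_phi_sq (x : E2) : ‖wfun (‖x‖^2) • x‖^2 = Real.exp (‖x‖^2/2) - 1 := by
  rcases eq_or_ne x 0 with rfl | hx
  · simp
  · have ht : 0 < ‖x‖^2 := by have := norm_pos_iff.2 hx; positivity
    have hA : (0:ℝ) ≤ Real.exp (‖x‖^2/2) - 1 := by
      have : (1:ℝ) ≤ Real.exp (‖x‖^2/2) := by
        rw [← Real.exp_zero]; exact Real.exp_le_exp.2 (by linarith)
      linarith
    rw [norm_smul, mul_pow, Real.norm_eq_abs, sq_abs]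
    unfold wfun
    rw [div_pow, Real.sq_sqrt hA, Real.sq_sqrt ht.le]
    field_simp

theorem phi_injOn : InjOn (fun x : E2 => wfun (‖x‖^2) • x) {x : E2 | x ≠ 0} := by
  intro x hx y hy hxy
  simp only [mem_setOf_eq] at hx hy
  have htx : 0 < ‖x‖^2 := by have := norm_pos_iff.2 hx; positivity
  have hty : 0 < ‖y‖^2 := by have := norm_pos_iff.2 hy; positivity
  have hxy' : wfun (‖x‖^2) • x = wfun (‖y‖^2) • y := hxy
  have hexp : ‖x‖^2 = ‖y‖^2 := by
    have h1 := norm_phi_sq x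
    have h2 := norm_phi_sq y
    rw [hxy', h2] at h1
    have := Real.exp_eq_exp.1 (by linarith : Real.exp (‖y‖^2/2) = Real.exp (‖x‖^2/2))
    linarith
  rw [hexp] at hxy'
  exact smul_right_injective E2 (ne_of_gt (wfun_pos hty)) hxy'

theorem phi_image : (fun x : E2 => wfun (‖x‖^2) • x) '' {x : E2 | x ≠ 0} = {y : E2 | y ≠ 0} := by
  ext y
  simp only [mem_image, mem_setOf_eq]
  constructor
  · rintro ⟨x, hx, rfl⟩
    have htx : 0 < ‖x‖^2 := by have := norm_pos_iff.2 hx; positivity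
    exact smul_ne_zero (ne_of_gt (wfun_pos htx)) hx
  · intro hy
    have hny : 0 < ‖y‖ := norm_pos_iff.2 hy
    have hlog : 0 < Real.log (1 + ‖y‖^2) := Real.log_pos (by nlinarith)
    set r : ℝ := Real.sqrt (2 * Real.log (1 + ‖y‖^2)) with hr
    have hrpos : 0 < r := Real.sqrt_pos.2 (by linarith)
    refine ⟨(r / ‖y‖) • y, ?_, ?_⟩
    · exact smul_ne_zero (by positivity) hy
    · have hnx : ‖(r / ‖y‖) • y‖ = r := by
        rw [norm_smul, Real.norm_eq_abs, abs_of_pos (by positivity)]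
        field_simp
      have ht : ‖(r / ‖y‖) • y‖^2 = 2 * Real.log (1 + ‖y‖^2) := by
        rw [hnx, Real.sq_sqrt (by linarith)]
      rw [ht]
      have hexp : Real.exp (2 * Real.log (1 + ‖y‖^2) / 2) = 1 + ‖y‖^2 := by
        rw [show 2 * Real.log (1 + ‖y‖^2) / 2 = Real.log (1 + ‖y‖^2) by ring,
          Real.exp_log (by positivity)]
      have hw : wfun (2 * Real.log (1 + ‖y‖^2)) = ‖y‖ / r := by
        unfold wfun
        rw [hexp, ← hr]
        congr 1
        rw [show (1 + ‖y‖^2 - 1) = ‖y‖^2 by ring, Real.sqrt_sq hny.le]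
      rw [hw, smul_smul]
      rw [show ‖y‖ / r * (r / ‖y‖) = 1 by field_simp]
      simp

theorem map_withDensity_comp {α β : Type*} [MeasurableSpace α] [MeasurableSpace β]
    (μ : Measure α) {f : α → β} (hf : Measurable f) {g : β → ENNReal} (hg : Measurable g) :
    Measure.map f (μ.withDensity (fun x => g (f x))) = (Measure.map f μ).withDensity g := by
  refine Measure.ext fun s hs => ?_
  rw [Measure.map_apply hf hs, withDensity_apply _ (hf hs), withDensity_apply _ hs,
    setLIntegral_map hs hg hf]

set_option maxHeartbeats 1000000 in
/-- The map `φ(x) = (x/‖x‖)·√(e^{‖x‖²/2} − 1)` on `ℝ²` pushes the standard Gaussian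
measure forward to the measure `μ_stereo` with density `(1/(4π)) · 4/(1 + ‖y‖²)²`. -/
theorem stmt5 :
    Measure.map
      (fun x : EuclideanSpace ℝ (Fin 2) =>
        (Real.sqrt (Real.exp (‖x‖^2 / 2) - 1) / ‖x‖) • x)
      (volume.withDensity
        (fun x : EuclideanSpace ℝ (Fin 2) =>
          ENNReal.ofReal ((1 / (2 * π)) * Real.exp (-‖x‖^2 / 2))))
    = volume.withDensity
        (fun y : EuclideanSpace ℝ (Fin 2) =>
          ENNReal.ofReal ((1 / (4 * π)) * (4 / (1 + ‖y‖^2)^2))) := by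
  rw [phi_eq]
  set φ : E2 → E2 := fun x => wfun (‖x‖^2) • x with hφdef
  set D : E2 → ENNReal := fun x => ENNReal.ofReal (Real.exp (‖x‖^2/2) / 2) with hDdef
  set h : E2 → ENNReal := fun y => ENNReal.ofReal ((1 / (4 * π)) * (4 / (1 + ‖y‖^2)^2)) with hhdef
  have hφ : Measurable φ := measurable_phi
  have hD : Measurable D := by fun_prop
  have hh : Measurable h := by fun_prop
  have hs : MeasurableSet {x : E2 | x ≠ 0} := by
    have : {x : E2 | x ≠ 0} = ({0}ᶜ : Set E2) := rfl
    rw [this]; exact (measurableSet_singleton 0).compl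
  have hdens : (fun x : E2 => ENNReal.ofReal ((1 / (2 * π)) * Real.exp (-‖x‖^2 / 2)))
      = fun x => D x * h (φ x) := by
    funext x
    rw [hDdef, hhdef, ← ENNReal.ofReal_mul (by positivity)]
    congr 1
    have hA := norm_phi_sq x
    show (1 / (2 * π)) * Real.exp (-‖x‖^2 / 2)
        = Real.exp (‖x‖^2/2) / 2 * ((1 / (4 * π)) * (4 / (1 + ‖φ x‖^2)^2))
    rw [hA, show (1 + (Real.exp (‖x‖^2/2) - 1)) = Real.exp (‖x‖^2/2) by ring]
    have hX : (0:ℝ) < Real.exp (‖x‖^2/2) := Real.exp_pos _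
    have hπ : (0:ℝ) < π := Real.pi_pos
    rw [show -‖x‖^2/2 = -(‖x‖^2/2) by ring, Real.exp_neg]
    field_simp
  rw [hdens]
  rw [show (fun x => D x * h (φ x)) = D * (fun x => h (φ x)) from rfl,
    withDensity_mul (μ := volume) (f := D) (g := fun x => h (φ x)) hD (hh.comp hφ),
    map_withDensity_comp (volume.withDensity D) hφ hh]
  have key : Measure.map φ (volume.withDensity D) = volume := by
    have hcompl : ({x : E2 | x ≠ 0}ᶜ : Set E2) = {0} := by ext z; simp
    have hae1 : {x : E2 | x ≠ 0} =ᵐ[(volume.withDensity D : Measure E2)] (univ : Set E2) := by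
      rw [ae_eq_univ, hcompl]
      exact withDensity_absolutelyContinuous volume D (measure_singleton 0)
    have hae2 : {y : E2 | y ≠ 0} =ᵐ[(volume : Measure E2)] (univ : Set E2) := by
      rw [ae_eq_univ, hcompl]
      exact measure_singleton 0
    have harg : (volume.withDensity D).restrict {x : E2 | x ≠ 0}
        = (volume.restrict {x : E2 | x ≠ 0}).withDensity
            (fun x => ENNReal.ofReal |(Lmap x).det|) := by
      rw [restrict_withDensity hs]
      have hdae : D =ᵐ[(volume : Measure E2).restrict {x : E2 | x ≠ 0}]
          (fun x => ENNReal.ofReal |(Lmap x).det|) :=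
        (ae_restrict_iff' hs).2 (ae_of_all _ fun x hx => by
          have hx' : x ≠ 0 := hx
          have ht : 0 < ‖x‖^2 := by have := norm_pos_iff.2 hx'; positivity
          show ENNReal.ofReal (Real.exp (‖x‖^2 / 2) / 2) = ENNReal.ofReal |(Lmap x).det|
          rw [Lmap_det, wfun_det_id ht, abs_of_pos (by positivity)])
      exact withDensity_congr_ae hdae
    have hmain := map_withDensity_abs_det_fderiv_eq_addHaar (volume : Measure E2) hs.nullMeasurableSet
        (fun x hx => (phi_hasFDerivAt hx).hasFDerivWithinAt) phi_injOn
    calc Measure.map φ (volume.withDensity D)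
        = Measure.map φ ((volume.withDensity D).restrict {x : E2 | x ≠ 0}) := by
          rw [Measure.restrict_congr_set hae1, Measure.restrict_univ]
      _ = volume.restrict (φ '' {x : E2 | x ≠ 0}) := by
          rw [harg]; exact hmain
      _ = volume := by
          rw [phi_image, Measure.restrict_congr_set hae2, Measure.restrict_univ]
  rw [key]
end

section
/- For every measurable A ⊆ ℝ² and the map φ(x) = (x/‖x‖) · 2 arccos(e^{−‖x‖²/4}), the standard Gaussian measure of A equals the measure of φ(A) under the measure on the ball B²(0,π) with density (1/(4π)) sin(‖v‖)/‖v‖ with respect to Lebesgue measure. -/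
open MeasureTheory Real Set

noncomputable section Stmt19AuxSection

namespace Stmt19Aux

/-- the radial profile of the map -/
def g (r : ℝ) : ℝ := 2 * Real.arccos (Real.exp (-r ^ 2 / 4))

/-- derivative of `g` -/
def g' (r : ℝ) : ℝ := r * Real.exp (-r ^ 2 / 4) / Real.sqrt (1 - Real.exp (-r ^ 2 / 2))

lemma u_pos (r : ℝ) : 0 < Real.exp (-r ^ 2 / 4) := Real.exp_pos _

lemma u_lt_one {r : ℝ} (hr : 0 < r) : Real.exp (-r ^ 2 / 4) < 1 := by
  rw [Real.exp_lt_one_iff]; nlinarith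

lemma u_sq (r : ℝ) : Real.exp (-r ^ 2 / 4) ^ 2 = Real.exp (-r ^ 2 / 2) := by
  rw [sq, ← Real.exp_add]; congr 1; ring

lemma one_sub_usq_pos {r : ℝ} (hr : 0 < r) : 0 < 1 - Real.exp (-r ^ 2 / 2) := by
  have : Real.exp (-r ^ 2 / 2) < 1 := by rw [Real.exp_lt_one_iff]; nlinarith
  linarith

lemma g_pos {r : ℝ} (hr : 0 < r) : 0 < g r := by
  have := Real.arccos_pos.mpr (u_lt_one hr); unfold g; linarith

lemma g_lt_pi (r : ℝ) : g r < π := by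
  have := Real.arccos_lt_pi_div_two.mpr (u_pos r); unfold g; linarith

lemma g'_pos {r : ℝ} (hr : 0 < r) : 0 < g' r :=
  div_pos (mul_pos hr (u_pos r)) (Real.sqrt_pos.mpr (one_sub_usq_pos hr))

lemma g_inj {a b : ℝ} (ha : 0 < a) (hb : 0 < b) (h : g a = g b) : a = b := by
  unfold g at h
  have h1 : Real.arccos (Real.exp (-a ^ 2 / 4)) = Real.arccos (Real.exp (-b ^ 2 / 4)) := by
    linarith
  have h2 := congrArg Real.cos h1
  rw [Real.cos_arccos (by linarith [u_pos a]) (u_lt_one ha).le,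
      Real.cos_arccos (by linarith [u_pos b]) (u_lt_one hb).le] at h2
  have h3 : -a ^ 2 / 4 = -b ^ 2 / 4 := Real.exp_eq_exp.mp h2
  have h4 : (a - b) * (a + b) = 0 := by nlinarith
  rcases mul_eq_zero.mp h4 with h | h
  · linarith
  · linarith

lemma hasDerivAt_g {r : ℝ} (hr : 0 < r) : HasDerivAt g (g' r) r := by
  have h1 : HasDerivAt (fun t : ℝ => -t ^ 2 / 4) (-(2 * r) / 4) r := by
    simpa using ((hasDerivAt_pow 2 r).neg.div_const 4)
  have h2 : HasDerivAt (fun t : ℝ => Real.exp (-t ^ 2 / 4))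
      (Real.exp (-r ^ 2 / 4) * (-(2 * r) / 4)) r := (Real.hasDerivAt_exp _).comp r h1
  have hne1 : Real.exp (-r ^ 2 / 4) ≠ -1 := by linarith [u_pos r]
  have hne2 : Real.exp (-r ^ 2 / 4) ≠ 1 := ne_of_lt (u_lt_one hr)
  have h3 := Real.hasDerivAt_arccos hne1 hne2
  have h4 := h3.comp r h2
  have h5 := h4.const_mul 2
  have hs : (0:ℝ) < Real.sqrt (1 - Real.exp (-r ^ 2 / 2)) :=
    Real.sqrt_pos.mpr (one_sub_usq_pos hr)
  refine h5.congr_deriv ?_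
  rw [u_sq]
  unfold g'
  field_simp
  ring

lemma key {r : ℝ} (hr : 0 < r) :
    ENNReal.ofReal |r| * ENNReal.ofReal (1 / (2 * π) * Real.exp (-r ^ 2 / 2)) =
    ENNReal.ofReal |g r * g' r| *
      ENNReal.ofReal (1 / (4 * π) * (Real.sin (g r) / g r)) := by
  rw [← ENNReal.ofReal_mul (abs_nonneg _), ← ENNReal.ofReal_mul (abs_nonneg _)]
  congr 1
  rw [abs_of_pos hr, abs_of_pos (mul_pos (g_pos hr) (g'_pos hr))]
  have hsin : Real.sin (g r) =
      2 * Real.sqrt (1 - Real.exp (-r ^ 2 / 2)) * Real.exp (-r ^ 2 / 4) := by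
    unfold g
    rw [Real.sin_two_mul, Real.sin_arccos,
      Real.cos_arccos (by linarith [u_pos r]) (u_lt_one hr).le, u_sq]
  rw [hsin]
  have hs : (0:ℝ) < Real.sqrt (1 - Real.exp (-r ^ 2 / 2)) :=
    Real.sqrt_pos.mpr (one_sub_usq_pos hr)
  have hg : g r ≠ 0 := (g_pos hr).ne'
  have hu2 := u_sq r
  unfold g'
  rw [← hu2] at hs ⊢
  have hs' := hs.ne'
  generalize Real.sqrt (1 - Real.exp (-r ^ 2 / 4) ^ 2) = t at hs' ⊢
  field_simp
  ring

/-- derivative of `polarCoord.symm` -/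
def Bpsi (p : ℝ × ℝ) : ℝ × ℝ →L[ℝ] ℝ × ℝ :=
  LinearMap.toContinuousLinearMap (Matrix.toLin (Module.Basis.finTwoProd ℝ) (Module.Basis.finTwoProd ℝ)
    !![Real.cos p.2, -p.1 * Real.sin p.2; Real.sin p.2, p.1 * Real.cos p.2])

lemma Bpsi_det (p : ℝ × ℝ) : (Bpsi p).det = p.1 := by
  conv_rhs => rw [← one_mul p.1, ← cos_sq_add_sin_sq p.2]
  simp only [Bpsi, neg_mul, LinearMap.det_toContinuousLinearMap, LinearMap.det_toLin,
    Matrix.det_fin_two_of, sub_neg_eq_add]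
  ring

lemma hasFDerivAt_psymm (p : ℝ × ℝ) : HasFDerivAt (⇑polarCoord.symm) (Bpsi p) p :=
  hasFDerivAt_polarCoord_symm p

def F (p : ℝ × ℝ) : ℝ × ℝ := (g p.1, p.2)

def LF (p : ℝ × ℝ) : ℝ × ℝ →L[ℝ] ℝ × ℝ :=
  LinearMap.toContinuousLinearMap (Matrix.toLin (Module.Basis.finTwoProd ℝ) (Module.Basis.finTwoProd ℝ)
    !![g' p.1, 0; 0, 1])

lemma LF_det (p : ℝ × ℝ) : (LF p).det = g' p.1 := by
  simp [LF, LinearMap.det_toContinuousLinearMap, LinearMap.det_toLin, Matrix.det_fin_two_of]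

lemma hasFDerivAt_F {p : ℝ × ℝ} (hp : 0 < p.1) : HasFDerivAt F (LF p) p := by
  rw [LF, Matrix.toLin_finTwoProd_toContinuousLinearMap]
  have h1 : HasFDerivAt (fun q : ℝ × ℝ => g q.1)
      (g' p.1 • ContinuousLinearMap.fst ℝ ℝ ℝ) p :=
    (hasDerivAt_g hp).comp_hasFDerivAt p hasFDerivAt_fst
  have h2 := h1.prodMk hasFDerivAt_snd
  simp only [zero_smul, one_smul, add_zero, zero_add]
  exact h2

lemma hasFDerivAt_comp {p : ℝ × ℝ} (hp : 0 < p.1) :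
    HasFDerivAt (fun q => polarCoord.symm (F q)) ((Bpsi (F p)).comp (LF p)) p :=
  (hasFDerivAt_psymm (F p)).comp p (hasFDerivAt_F hp)

lemma comp_det (p : ℝ × ℝ) : ((Bpsi (F p)).comp (LF p)).det = g p.1 * g' p.1 := by
  rw [ContinuousLinearMap.det, ContinuousLinearMap.toLinearMap_comp, LinearMap.det_comp]
  have h1 : (Bpsi (F p)).det = g p.1 := Bpsi_det (F p)
  have h2 : (LF p).det = g' p.1 := LF_det p
  rw [ContinuousLinearMap.det] at h1 h2
  rw [h1, h2]

/-- Euclidean norm on `ℝ × ℝ` -/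
def np (p : ℝ × ℝ) : ℝ := Real.sqrt (p.1 ^ 2 + p.2 ^ 2)

lemma psymm_apply (p : ℝ × ℝ) :
    polarCoord.symm p = (p.1 * Real.cos p.2, p.1 * Real.sin p.2) := rfl

lemma np_psymm (p : ℝ × ℝ) : np (polarCoord.symm p) = |p.1| := by
  rw [psymm_apply]
  unfold np
  have h : (p.1 * Real.cos p.2) ^ 2 + (p.1 * Real.sin p.2) ^ 2 = p.1 ^ 2 := by
    linear_combination p.1 ^ 2 * Real.sin_sq_add_cos_sq p.2
  rw [h, Real.sqrt_sq_eq_abs]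

lemma np_smul (c : ℝ) (p : ℝ × ℝ) : np (c • p) = |c| * np p := by
  unfold np
  have h1 : (c • p).1 = c * p.1 := rfl
  have h2 : (c • p).2 = c * p.2 := rfl
  rw [h1, h2, show (c * p.1) ^ 2 + (c * p.2) ^ 2 = c ^ 2 * (p.1 ^ 2 + p.2 ^ 2) by ring,
    Real.sqrt_mul (sq_nonneg c), Real.sqrt_sq_eq_abs]

lemma np_pos {x : ℝ × ℝ} (hx : x ≠ 0) : 0 < np x := by
  have h : x.1 ≠ 0 ∨ x.2 ≠ 0 := by
    by_contra h
    push_neg at h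
    exact hx (Prod.ext h.1 h.2)
  apply Real.sqrt_pos.mpr
  rcases h with h | h
  · have := sq_pos_of_ne_zero h; nlinarith [sq_nonneg x.2]
  · have := sq_pos_of_ne_zero h; nlinarith [sq_nonneg x.1]

/-- the radial map on `ℝ × ℝ` -/
def phi2 (x : ℝ × ℝ) : ℝ × ℝ := (g (np x) / np x) • x

lemma hsrc (x : ℝ × ℝ) : x ∈ polarCoord.source ↔ 0 < x.1 ∨ x.2 ≠ 0 := Iff.rfl

lemma main2 (A₂ : Set (ℝ × ℝ)) (hA₂ : MeasurableSet A₂) :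
    ∫⁻ p in A₂, ENNReal.ofReal (1 / (2 * π) * Real.exp (-np p ^ 2 / 2)) =
    ∫⁻ p in phi2 '' A₂ ∩ {p | np p < π},
      ENNReal.ofReal (1 / (4 * π) * (Real.sin (np p) / np p)) := by
  have hcont : Continuous (⇑polarCoord.symm : ℝ × ℝ → ℝ × ℝ) :=
    (continuous_fst.mul (Real.continuous_cos.comp continuous_snd)).prodMk
      (continuous_fst.mul (Real.continuous_sin.comp continuous_snd))
  set S : Set (ℝ × ℝ) := polarCoord.target ∩ ⇑polarCoord.symm ⁻¹' A₂ with hSdef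
  have hSm : MeasurableSet S :=
    polarCoord.open_target.measurableSet.inter (hcont.measurable hA₂)
  have hr_of_S : ∀ p ∈ S, 0 < p.1 := fun p hp => (mem_prod.mp hp.1).1
  have hnull : volume polarCoord.sourceᶜ = 0 := ae_eq_univ.mp polarCoord_source_ae_eq_univ
  have haes : ∀ᵐ x : ℝ × ℝ ∂volume, x ∈ polarCoord.source := by
    have h := polarCoord_source_ae_eq_univ
    rw [Filter.eventuallyEq_set] at h
    filter_upwards [h] with x hx
    exact hx.mpr (mem_univ x)
  have hres : ∀ T : Set (ℝ × ℝ),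
      volume.restrict T = volume.restrict (T ∩ polarCoord.source) := by
    intro T
    apply Measure.restrict_congr_set
    rw [Filter.eventuallyEq_set]
    filter_upwards [haes] with x hx
    rw [mem_inter_iff]
    exact (and_iff_left hx).symm
  have himg1 : ⇑polarCoord.symm '' S = A₂ ∩ polarCoord.source := by
    apply Subset.antisymm
    · rintro _ ⟨p, ⟨hpt, hpA⟩, rfl⟩
      exact ⟨hpA, polarCoord.map_target hpt⟩
    · rintro x ⟨hxA, hxs⟩
      exact ⟨polarCoord x, ⟨polarCoord.map_source hxs,
        by rw [mem_preimage, polarCoord.left_inv hxs]; exact hxA⟩, polarCoord.left_inv hxs⟩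
  have hinj1 : InjOn (⇑polarCoord.symm) S := by
    apply polarCoord.symm.injOn.mono
    rw [polarCoord.symm_source]
    exact inter_subset_left
  have hF_mem : ∀ p ∈ S, F p ∈ polarCoord.target := by
    intro p hp
    have hp1 := mem_prod.mp hp.1
    exact mem_prod.mpr ⟨mem_Ioi.mpr (g_pos hp1.1), hp1.2⟩
  have hLHS : ∫⁻ p in A₂, ENNReal.ofReal (1 / (2 * π) * Real.exp (-np p ^ 2 / 2)) =
      ∫⁻ p in S, ENNReal.ofReal |p.1| *
        ENNReal.ofReal (1 / (2 * π) * Real.exp (-p.1 ^ 2 / 2)) := by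
    rw [hres A₂, ← himg1,
      lintegral_image_eq_lintegral_abs_det_fderiv_mul volume hSm
        (fun p _ => (hasFDerivAt_psymm p).hasFDerivWithinAt) hinj1]
    apply setLIntegral_congr_fun hSm
    intro p hp
    simp only [Bpsi_det, np_psymm, sq_abs]
  have hcomm : ∀ p ∈ polarCoord.target,
      polarCoord.symm (F p) = phi2 (polarCoord.symm p) := by
    intro p hp
    have hr : 0 < p.1 := (mem_prod.mp hp).1
    unfold phi2
    rw [np_psymm, abs_of_pos hr, psymm_apply, psymm_apply]
    have h1 : (F p).1 = g p.1 := rfl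
    have h2 : (F p).2 = p.2 := rfl
    rw [h1, h2]
    have e1 : g p.1 / p.1 * (p.1 * Real.cos p.2) = g p.1 * Real.cos p.2 := by
      field_simp
    have e2 : g p.1 / p.1 * (p.1 * Real.sin p.2) = g p.1 * Real.sin p.2 := by
      field_simp
    rw [Prod.smul_mk, smul_eq_mul, smul_eq_mul, e1, e2]
  have himg2 : (fun q => polarCoord.symm (F q)) '' S =
      phi2 '' A₂ ∩ {p | np p < π} ∩ polarCoord.source := by
    have step1 : (fun q => polarCoord.symm (F q)) '' S =
        (fun q => phi2 (polarCoord.symm q)) '' S :=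
      Set.image_congr fun p hp => hcomm p hp.1
    have step2 : (fun q => phi2 (polarCoord.symm q)) '' S =
        phi2 '' (⇑polarCoord.symm '' S) :=
      (Set.image_image phi2 _ S).symm
    rw [step1, step2, himg1]
    apply Subset.antisymm
    · rintro _ ⟨x, ⟨hxA, hxs⟩, rfl⟩
      have hx0 : x ≠ 0 := by
        rintro rfl
        rcases (hsrc 0).mp hxs with h | h
        · exact lt_irrefl 0 h
        · exact h rfl
      have hnp := np_pos hx0
      have hc : 0 < g (np x) / np x := div_pos (g_pos hnp) hnp
      have hnphi : np (phi2 x) = g (np x) := by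
        unfold phi2
        rw [np_smul, abs_of_pos hc, div_mul_cancel₀ _ hnp.ne']
      refine ⟨⟨mem_image_of_mem _ hxA, ?_⟩, ?_⟩
      · rw [mem_setOf_eq, hnphi]; exact g_lt_pi _
      · rw [hsrc]
        have h1 : (phi2 x).1 = g (np x) / np x * x.1 := rfl
        have h2 : (phi2 x).2 = g (np x) / np x * x.2 := rfl
        rcases (hsrc x).mp hxs with h | h
        · left; rw [h1]; exact mul_pos hc h
        · right; rw [h2]; exact mul_ne_zero hc.ne' h
    · rintro v ⟨⟨⟨x, hxA, rfl⟩, _⟩, hvs⟩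
      have hx0 : x ≠ 0 := by
        rintro rfl
        have h0 : phi2 0 = (0 : ℝ × ℝ) := smul_zero _
        rw [h0] at hvs
        rcases (hsrc 0).mp hvs with h | h
        · exact lt_irrefl 0 h
        · exact h rfl
      have hnp := np_pos hx0
      have hc : 0 < g (np x) / np x := div_pos (g_pos hnp) hnp
      refine mem_image_of_mem _ ⟨hxA, ?_⟩
      rw [hsrc]
      have h1 : (phi2 x).1 = g (np x) / np x * x.1 := rfl
      have h2 : (phi2 x).2 = g (np x) / np x * x.2 := rfl
      rcases (hsrc _).mp hvs with h | h
      · left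
        rw [h1] at h
        nlinarith
      · right
        rw [h2] at h
        intro h0
        rw [h0, mul_zero] at h
        exact h rfl
  have hinj2 : InjOn (fun q => polarCoord.symm (F q)) S := by
    intro p hp q hq h
    have hFeq : F p = F q := by
      apply polarCoord.symm.injOn ?_ ?_ h
      · rw [polarCoord.symm_source]; exact hF_mem p hp
      · rw [polarCoord.symm_source]; exact hF_mem q hq
    have h2 := congrArg Prod.snd hFeq
    have h1 := congrArg Prod.fst hFeq
    exact Prod.ext (g_inj (hr_of_S p hp) (hr_of_S q hq) h1) h2
  have hRHS : ∫⁻ p in phi2 '' A₂ ∩ {p | np p < π},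
      ENNReal.ofReal (1 / (4 * π) * (Real.sin (np p) / np p)) =
      ∫⁻ p in S, ENNReal.ofReal |g p.1 * g' p.1| *
        ENNReal.ofReal (1 / (4 * π) * (Real.sin (g p.1) / g p.1)) := by
    rw [hres (phi2 '' A₂ ∩ {p | np p < π}), ← himg2,
      lintegral_image_eq_lintegral_abs_det_fderiv_mul volume hSm
        (fun p hp => (hasFDerivAt_comp (hr_of_S p hp)).hasFDerivWithinAt) hinj2]
    apply setLIntegral_congr_fun hSm
    intro p hp
    have habs : |(F p).1| = g p.1 := abs_of_pos (g_pos (hr_of_S p hp))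
    simp only [comp_det, np_psymm, habs]
  rw [hLHS, hRHS]
  apply setLIntegral_congr_fun hSm
  intro p hp
  exact key (hr_of_S p hp)

end Stmt19Aux

end Stmt19AuxSection

/-- For every measurable `A ⊆ ℝ²` and the map `φ(x) = (x/‖x‖) · 2 arccos(e^{−‖x‖²/4})`,
the standard Gaussian measure of `A` equals the measure of `φ(A)` under the measure on
the ball `B²(0,π)` with density `(1/(4π)) sin(‖v‖)/‖v‖`. -/
theorem stmt19 :
    ∀ A : Set (EuclideanSpace ℝ (Fin 2)), MeasurableSet A →
      (volume.withDensity
        (fun x : EuclideanSpace ℝ (Fin 2) =>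
          ENNReal.ofReal ((1 / (2 * π)) * Real.exp (-‖x‖^2 / 2)))) A =
      ((volume.restrict (Metric.ball (0 : EuclideanSpace ℝ (Fin 2)) π)).withDensity
        (fun v => ENNReal.ofReal ((1 / (4 * π)) * (Real.sin ‖v‖ / ‖v‖))))
        ((fun x : EuclideanSpace ℝ (Fin 2) =>
          (2 * Real.arccos (Real.exp (-‖x‖^2 / 4)) / ‖x‖) • x) '' A) := by
  intro A hA
  let eqv : (ℝ × ℝ) ≃ᵐ EuclideanSpace ℝ (Fin 2) :=
    Complex.measurableEquivRealProd.symm.trans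
      Complex.orthonormalBasisOneI.repr.toHomeomorph.toMeasurableEquiv
  have hmp : MeasurePreserving (⇑eqv) volume volume :=
    Complex.orthonormalBasisOneI.measurePreserving_repr.comp
      (Complex.volume_preserving_equiv_real_prod.symm _)
  have hemb : MeasurableEmbedding (⇑eqv) := eqv.measurableEmbedding
  have hnorm : ∀ p : ℝ × ℝ, ‖eqv p‖ = Stmt19Aux.np p := by
    intro p
    show ‖Complex.orthonormalBasisOneI.repr (Complex.measurableEquivRealProd.symm p)‖ = _
    rw [LinearIsometryEquiv.norm_map, Complex.measurableEquivRealProd_symm_apply,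
      Complex.norm_def]
    unfold Stmt19Aux.np
    congr 1
    rw [Complex.normSq_mk]
    ring
  have hsmul : ∀ (c : ℝ) (p : ℝ × ℝ), eqv (c • p) = c • eqv p := by
    intro c p
    show Complex.orthonormalBasisOneI.repr (Complex.measurableEquivRealProd.symm (c • p)) = _
    have h : Complex.measurableEquivRealProd.symm (c • p) =
        c • Complex.measurableEquivRealProd.symm p := by
      apply Complex.ext <;>
        simp [Complex.measurableEquivRealProd_symm_apply, Complex.real_smul]
    rw [h, LinearIsometryEquiv.map_smul]
    rfl
  have hA₂ : MeasurableSet (⇑eqv ⁻¹' A) := eqv.measurable hA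
  have hcomm : ∀ p : ℝ × ℝ,
      (2 * Real.arccos (Real.exp (-‖eqv p‖ ^ 2 / 4)) / ‖eqv p‖) • eqv p =
      eqv (Stmt19Aux.phi2 p) := by
    intro p
    rw [hnorm, ← hsmul]
    rfl
  have himgeq : ((fun x : EuclideanSpace ℝ (Fin 2) =>
      (2 * Real.arccos (Real.exp (-‖x‖ ^ 2 / 4)) / ‖x‖) • x) '' A) =
      ⇑eqv '' (Stmt19Aux.phi2 '' (⇑eqv ⁻¹' A)) := by
    conv_lhs => rw [← Set.image_preimage_eq A eqv.surjective]
    rw [Set.image_image, Set.image_image]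
    exact Set.image_congr fun p _ => hcomm p
  have hball : ⇑eqv ⁻¹' Metric.ball (0 : EuclideanSpace ℝ (Fin 2)) π
      = {p : ℝ × ℝ | Stmt19Aux.np p < π} := by
    ext p
    simp [mem_ball_zero_iff, hnorm]
  rw [withDensity_apply _ hA, withDensity_apply',
    Measure.restrict_restrict' measurableSet_ball,
    ← hmp.setLIntegral_comp_preimage_emb hemb, ← hmp.setLIntegral_comp_preimage_emb hemb,
    himgeq, Set.preimage_inter, Set.preimage_image_eq _ eqv.injective, hball]
  simp only [hnorm]
  exact Stmt19Aux.main2 (⇑eqv ⁻¹' A) hA₂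
end
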